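/- Resolvent multiplier identity (Lemma 3.3/Lemma 4.3): Given resolvent data and a real-valued C¹ function q on [0,L] with q(0) = 0, set I_V = q(L)·(ρ|Φ(L)|² + α₁|V′(L)|²), I_P = q(L)·(μ|Θ(L)|² + β|γV′(L) − P′(L)|²), R₁ = Re ∫₀ᴸ 2μ·q·( f₄·conj(P′) + conj(f₃′)·Θ ) dx, and R₂ = Re ∫₀ᴸ 2ρ·q·( f₂·conj(V′) + Φ·conj(f₁′) ) dx. Then I_V + I_P − ∫₀ᴸ q′·( ρ|Φ|² + μ|Θ|² + α₁|V′|² + β|γV′ − P′|² ) dx = −R₁ − R₂. -/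

import Mathlib

open Complex

/-- Resolvent data for the damped piezoelectric beam system with magnetic effect and
tip body: solutions of the resolvent (spectral) equation `iλU − AU = F` written in
components, together with the boundary conditions. -/
structure ResolventData (ρ μ β m₁ m₂ ξ₁ ξ₂ γ α₁ α L lam : ℝ) where
  V : ℝ → ℂ
  P : ℝ → ℂ
  Φ : ℝ → ℂ
  Θ : ℝ → ℂ
  f₁ : ℝ → ℂ
  f₂ : ℝ → ℂ
  f₃ : ℝ → ℂ
  f₄ : ℝ → ℂ
  u : ℂ
  η : ℂ
  f₅ : ℂ
  f₆ : ℂ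
  hV : ContDiff ℝ 2 V
  hP : ContDiff ℝ 2 P
  hΦ : ContDiff ℝ 1 Φ
  hΘ : ContDiff ℝ 1 Θ
  hf₁ : ContDiff ℝ 1 f₁
  hf₃ : ContDiff ℝ 1 f₃
  hf₂ : Continuous f₂
  hf₄ : Continuous f₄
  eq1 : ∀ x ∈ Set.Icc (0:ℝ) L, Complex.I * (lam : ℂ) * V x - Φ x = f₁ x
  eq2 : ∀ x ∈ Set.Icc (0:ℝ) L,
    Complex.I * (lam : ℂ) * (ρ : ℂ) * Φ x - (α : ℂ) * deriv (deriv V) x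
      + (γ : ℂ) * (β : ℂ) * deriv (deriv P) x = (ρ : ℂ) * f₂ x
  eq3 : ∀ x ∈ Set.Icc (0:ℝ) L, Complex.I * (lam : ℂ) * P x - Θ x = f₃ x
  eq4 : ∀ x ∈ Set.Icc (0:ℝ) L,
    Complex.I * (lam : ℂ) * (μ : ℂ) * Θ x - (β : ℂ) * deriv (deriv P) x
      + (γ : ℂ) * (β : ℂ) * deriv (deriv V) x = (μ : ℂ) * f₄ x
  bV0 : V 0 = 0
  bP0 : P 0 = 0
  bΦ0 : Φ 0 = 0
  bΘ0 : Θ 0 = 0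
  bΦL : Φ L = u
  bΘL : Θ L = η
  bu : (Complex.I * (lam : ℂ) * (m₁ : ℂ) + (ξ₁ : ℂ)) * u + (α : ℂ) * deriv V L
      - (γ : ℂ) * (β : ℂ) * deriv P L = (m₁ : ℂ) * f₅
  bη : (Complex.I * (lam : ℂ) * (m₂ : ℂ) + (ξ₂ : ℂ)) * η + (β : ℂ) * deriv P L
      - (γ : ℂ) * (β : ℂ) * deriv V L = (m₂ : ℂ) * f₆

variable {ρ μ β m₁ m₂ ξ₁ ξ₂ γ α₁ α L lam : ℝ}

/-- The squared interior norm `N²` of the resolvent data. -/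
noncomputable def Nsq (D : ResolventData ρ μ β m₁ m₂ ξ₁ ξ₂ γ α₁ α L lam) : ℝ :=
  ∫ x in (0:ℝ)..L,
    (ρ * ‖D.Φ x‖ ^ 2 + μ * ‖D.Θ x‖ ^ 2
      + α₁ * ‖deriv D.V x‖ ^ 2
      + β * ‖(γ : ℂ) * deriv D.V x - deriv D.P x‖ ^ 2)

/-- The squared state-space norm `‖U‖²` of the resolvent data. -/
noncomputable def Usq (D : ResolventData ρ μ β m₁ m₂ ξ₁ ξ₂ γ α₁ α L lam) : ℝ :=
  Nsq D + m₁ * ‖D.u‖ ^ 2 + m₂ * ‖D.η‖ ^ 2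

/-- The squared state-space norm `‖F‖²` of the right-hand side of the resolvent
equation. -/
noncomputable def Fsq (D : ResolventData ρ μ β m₁ m₂ ξ₁ ξ₂ γ α₁ α L lam) : ℝ :=
  (∫ x in (0:ℝ)..L,
      (ρ * ‖D.f₂ x‖ ^ 2 + μ * ‖D.f₄ x‖ ^ 2
        + α₁ * ‖deriv D.f₁ x‖ ^ 2
        + β * ‖(γ : ℂ) * deriv D.f₁ x - deriv D.f₃ x‖ ^ 2))
    + m₁ * ‖D.f₅‖ ^ 2 + m₂ * ‖D.f₆‖ ^ 2


lemma hasDerivAt_abs_sq {f : ℝ → ℂ} {f' : ℂ} {x : ℝ} (hf : HasDerivAt f f' x) :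
    HasDerivAt (fun y => ‖f y‖ ^ 2) (2 * (f x * (starRingEnd ℂ) f').re) x := by
  have h1 : HasDerivAt (fun y => f y * (starRingEnd ℂ) (f y))
      (f' * (starRingEnd ℂ) (f x) + f x * (starRingEnd ℂ) f') x := hf.mul hf.star
  have h2 := (Complex.reCLM.hasFDerivAt).comp_hasDerivAt x h1
  have h3 : (fun y => Complex.reCLM (f y * (starRingEnd ℂ) (f y)))
      = fun y => ‖f y‖ ^ 2 := by
    funext y
    simp [Complex.mul_conj, Complex.sq_norm]
  rw [show (⇑Complex.reCLM ∘ fun y => f y * (starRingEnd ℂ) (f y)) = fun y => ‖f y‖ ^ 2 from h3] at h2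
  refine h2.congr_deriv ?_
  simp [Complex.add_re, Complex.mul_re, Complex.conj_re, Complex.conj_im]
  ring


lemma key_complex (ρ μ β γ α₁ α lam Q : ℝ) (hα : α = α₁ + γ ^ 2 * β)
    (a a' b b' v v' p p' F2 F4 : ℂ)
    (h2 : (ρ:ℂ) * F2 = Complex.I * (lam:ℂ) * (ρ:ℂ) * a - (α:ℂ) * v' + (γ:ℂ) * (β:ℂ) * p')
    (h4 : (μ:ℂ) * F4 = Complex.I * (lam:ℂ) * (μ:ℂ) * b - (β:ℂ) * p' + (γ:ℂ) * (β:ℂ) * v') :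
    ((Q:ℂ) * (2*(ρ:ℂ)*(a * (starRingEnd ℂ) a') + 2*(μ:ℂ)*(b * (starRingEnd ℂ) b')
        + 2*(α₁:ℂ)*(v * (starRingEnd ℂ) v')
        + 2*(β:ℂ)*(((γ:ℂ)*v - p) * (starRingEnd ℂ) ((γ:ℂ)*v' - p')))
      + 2*(μ:ℂ)*(Q:ℂ)*(F4 * (starRingEnd ℂ) p
          + (starRingEnd ℂ) (Complex.I*(lam:ℂ)*p - b') * b)
      + 2*(ρ:ℂ)*(Q:ℂ)*(F2 * (starRingEnd ℂ) v
          + a * (starRingEnd ℂ) (Complex.I*(lam:ℂ)*v - a'))).re = 0 := by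
  have hαC : (α:ℂ) = (α₁:ℂ) + (γ:ℂ)^2*(β:ℂ) := by exact_mod_cast congrArg (Complex.ofReal) hα
  set t : ℂ := 2*(Q:ℂ)*(((α₁:ℂ) + (γ:ℂ)^2*(β:ℂ)) * (v * (starRingEnd ℂ) v')
            + (γ:ℂ)*(β:ℂ)*(p' * (starRingEnd ℂ) v) + (γ:ℂ)*(β:ℂ)*(v' * (starRingEnd ℂ) p)
            + (β:ℂ)*(p * (starRingEnd ℂ) p')) with ht
  have hmain : (Q:ℂ) * (2*(ρ:ℂ)*(a * (starRingEnd ℂ) a') + 2*(μ:ℂ)*(b * (starRingEnd ℂ) b')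
        + 2*(α₁:ℂ)*(v * (starRingEnd ℂ) v')
        + 2*(β:ℂ)*(((γ:ℂ)*v - p) * (starRingEnd ℂ) ((γ:ℂ)*v' - p')))
      + 2*(μ:ℂ)*(Q:ℂ)*(F4 * (starRingEnd ℂ) p
          + (starRingEnd ℂ) (Complex.I*(lam:ℂ)*p - b') * b)
      + 2*(ρ:ℂ)*(Q:ℂ)*(F2 * (starRingEnd ℂ) v
          + a * (starRingEnd ℂ) (Complex.I*(lam:ℂ)*v - a'))
      = t - (starRingEnd ℂ) t := by
    rw [ht]
    simp only [map_sub, map_add, map_mul, Complex.conj_I, Complex.conj_ofReal,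
      Complex.conj_conj, map_ofNat, map_pow]
    linear_combination (2*(Q:ℂ)*(starRingEnd ℂ) p) * h4 + (2*(Q:ℂ)*(starRingEnd ℂ) v) * h2
      - (2*(Q:ℂ)*(starRingEnd ℂ) v * v') * hαC
  rw [hmain]
  simp [Complex.sub_re, Complex.conj_re]

/-- Resolvent multiplier identity (Lemma 4.3): for any `C¹` multiplier `q` with
`q(0) = 0`, the boundary terms `I_V + I_P` minus the `q′`-weighted interior energy
equal `−R₁ − R₂`. -/
theorem resolvent_multiplier_identity
    (ρ μ β m₁ m₂ ξ₁ ξ₂ γ α₁ α L lam : ℝ)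
    (hρ : 0 < ρ) (hμ : 0 < μ) (hβ : 0 < β) (hm₁ : 0 < m₁) (hm₂ : 0 < m₂)
    (hξ₁ : 0 < ξ₁) (hξ₂ : 0 < ξ₂) (hL : 0 < L) (hα₁ : 0 < α₁)
    (hα : α = α₁ + γ ^ 2 * β)
    (q : ℝ → ℝ) (hq : ContDiff ℝ 1 q) (hq0 : q 0 = 0)
    (D : ResolventData ρ μ β m₁ m₂ ξ₁ ξ₂ γ α₁ α L lam) :
    q L * (ρ * ‖D.Φ L‖ ^ 2 + α₁ * ‖deriv D.V L‖ ^ 2)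
      + q L * (μ * ‖D.Θ L‖ ^ 2
          + β * ‖(γ : ℂ) * deriv D.V L - deriv D.P L‖ ^ 2)
      - (∫ x in (0:ℝ)..L,
          deriv q x * (ρ * ‖D.Φ x‖ ^ 2 + μ * ‖D.Θ x‖ ^ 2
            + α₁ * ‖deriv D.V x‖ ^ 2
            + β * ‖(γ : ℂ) * deriv D.V x - deriv D.P x‖ ^ 2))
    = -(∫ x in (0:ℝ)..L,
          (2 * (μ : ℂ) * (q x : ℂ) * (D.f₄ x * starRingEnd ℂ (deriv D.P x)
            + starRingEnd ℂ (deriv D.f₃ x) * D.Θ x))).re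
      - (∫ x in (0:ℝ)..L,
          (2 * (ρ : ℂ) * (q x : ℂ) * (D.f₂ x * starRingEnd ℂ (deriv D.V x)
            + D.Φ x * starRingEnd ℂ (deriv D.f₁ x)))).re := by
  obtain ⟨V, P, Φ, Θ, f₁, f₂, f₃, f₄, u, η, f₅, f₆, hV, hP, hΦ, hΘ, hf₁, hf₃, hf₂c, hf₄c,
    eq1, eq2, eq3, eq4, bV0, bP0, bΦ0, bΘ0, bΦL, bΘL, bu, bη⟩ := D
  simp only at *
  -- first derivatives are C¹
  have hV1 : ContDiff ℝ 1 (deriv V) := by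
    have h2 : ContDiff ℝ (1 + 1) V := by
      rw [one_add_one_eq_two]; exact hV
    exact (contDiff_succ_iff_deriv.mp h2).2.2
  have hP1 : ContDiff ℝ 1 (deriv P) := by
    have h2 : ContDiff ℝ (1 + 1) P := by
      rw [one_add_one_eq_two]; exact hP
    exact (contDiff_succ_iff_deriv.mp h2).2.2
  set V' := deriv V with hV'def
  set P' := deriv P with hP'def
  set V'' := deriv V' with hV''def
  set P'' := deriv P' with hP''def
  set Φ' := deriv Φ with hΦ'def
  set Θ' := deriv Θ with hΘ'def
  set f₁' := deriv f₁ with hf₁'def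
  set f₃' := deriv f₃ with hf₃'def
  set q' := deriv q with hq'def
  -- pointwise derivatives
  have hVd : ∀ x, HasDerivAt V (V' x) x := fun x =>
    ((hV.differentiable (by norm_num)) x).hasDerivAt
  have hPd : ∀ x, HasDerivAt P (P' x) x := fun x =>
    ((hP.differentiable (by norm_num)) x).hasDerivAt
  have hV'd : ∀ x, HasDerivAt V' (V'' x) x := fun x =>
    ((hV1.differentiable one_ne_zero) x).hasDerivAt
  have hP'd : ∀ x, HasDerivAt P' (P'' x) x := fun x =>
    ((hP1.differentiable one_ne_zero) x).hasDerivAt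
  have hΦd : ∀ x, HasDerivAt Φ (Φ' x) x := fun x =>
    ((hΦ.differentiable one_ne_zero) x).hasDerivAt
  have hΘd : ∀ x, HasDerivAt Θ (Θ' x) x := fun x =>
    ((hΘ.differentiable one_ne_zero) x).hasDerivAt
  have hqd : ∀ x, HasDerivAt q (q' x) x := fun x =>
    ((hq.differentiable one_ne_zero) x).hasDerivAt
  -- continuity facts
  have cΦ : Continuous Φ := hΦ.continuous
  have cΘ : Continuous Θ := hΘ.continuous
  have cΦ' : Continuous Φ' := hΦ.continuous_deriv le_rfl
  have cΘ' : Continuous Θ' := hΘ.continuous_deriv le_rfl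
  have cV' : Continuous V' := hV1.continuous
  have cP' : Continuous P' := hP1.continuous
  have cV'' : Continuous V'' := hV1.continuous_deriv le_rfl
  have cP'' : Continuous P'' := hP1.continuous_deriv le_rfl
  have cf₃' : Continuous f₃' := hf₃.continuous_deriv le_rfl
  have cf₁' : Continuous f₁' := hf₁.continuous_deriv le_rfl
  have cq : Continuous q := hq.continuous
  have cq' : Continuous q' := hq.continuous_deriv le_rfl
  have cconj : ∀ {g : ℝ → ℂ}, Continuous g → Continuous fun x => (starRingEnd ℂ) (g x) :=
    fun hg => Complex.continuous_conj.comp hg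
  -- the energy density and its derivative
  set E : ℝ → ℝ := fun x => ρ * ‖Φ x‖ ^ 2 + μ * ‖Θ x‖ ^ 2
      + α₁ * ‖V' x‖ ^ 2 + β * ‖(γ:ℂ) * V' x - P' x‖ ^ 2 with hEdef
  set E' : ℝ → ℝ := fun x =>
      ρ * (2 * (Φ x * (starRingEnd ℂ) (Φ' x)).re)
      + μ * (2 * (Θ x * (starRingEnd ℂ) (Θ' x)).re)
      + α₁ * (2 * (V' x * (starRingEnd ℂ) (V'' x)).re)
      + β * (2 * ((((γ:ℂ) * V' x - P' x)) * (starRingEnd ℂ) ((γ:ℂ) * V'' x - P'' x)).re)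
    with hE'def
  have hE : ∀ x, HasDerivAt E (E' x) x := by
    intro x
    have h4 : HasDerivAt (fun y => (γ:ℂ) * V' y - P' y) ((γ:ℂ) * V'' x - P'' x) x :=
      ((hV'd x).const_mul ((γ:ℂ))).sub (hP'd x)
    have hcomb := ((((hasDerivAt_abs_sq (hΦd x)).const_mul ρ).add
      ((hasDerivAt_abs_sq (hΘd x)).const_mul μ)).add
      ((hasDerivAt_abs_sq (hV'd x)).const_mul α₁)).add
        ((hasDerivAt_abs_sq h4).const_mul β)
    exact hcomb.congr_deriv (by simp only [hE'def])
  have cE : Continuous E := by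
    rw [hEdef]
    have cabs : ∀ {g : ℝ → ℂ}, Continuous g → Continuous fun x => ‖g x‖ ^ 2 :=
      fun hg => (continuous_norm.comp hg).pow 2
    exact (((continuous_const.mul (cabs cΦ)).add (continuous_const.mul (cabs cΘ))).add
      ((continuous_const.mul (cabs cV')))).add
        (continuous_const.mul (cabs ((continuous_const.mul cV').sub cP')))
  have cE' : Continuous E' := by
    rw [hE'def]
    have cre : ∀ {g h : ℝ → ℂ}, Continuous g → Continuous h →
        Continuous fun x => 2 * ((g x) * (starRingEnd ℂ) (h x)).re := fun hg hh =>
      continuous_const.mul (Complex.continuous_re.comp (hg.mul (cconj hh)))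
    exact (((continuous_const.mul (cre cΦ cΦ')).add (continuous_const.mul (cre cΘ cΘ'))).add
      ((continuous_const.mul (cre cV' cV'')))).add
        (continuous_const.mul (cre ((continuous_const.mul cV').sub cP')
          ((continuous_const.mul cV'').sub cP'')))
  -- derivative identities for f₁ and f₃ on the interval
  have hd1 : ∀ x ∈ Set.Icc (0:ℝ) L, f₁' x = Complex.I * (lam:ℂ) * V' x - Φ' x := by
    have hIoo : Set.EqOn f₁' (fun x => Complex.I * (lam:ℂ) * V' x - Φ' x) (Set.Ioo 0 L) := by
      intro x hx
      have hmem : Set.Ioo (0:ℝ) L ∈ nhds x := isOpen_Ioo.mem_nhds hx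
      have hev : f₁ =ᶠ[nhds x] fun y => Complex.I * (lam:ℂ) * V y - Φ y :=
        Filter.eventuallyEq_of_mem hmem fun y hy =>
          (eq1 y (Set.Ioo_subset_Icc_self hy)).symm
      rw [hf₁'def]
      rw [hev.deriv_eq]
      exact (((hVd x).const_mul (Complex.I * (lam:ℂ))).sub (hΦd x)).deriv
    have := hIoo.closure cf₁'
      (((continuous_const.mul cV').sub cΦ'))
    rw [closure_Ioo hL.ne] at this
    exact this
  have hd3 : ∀ x ∈ Set.Icc (0:ℝ) L, f₃' x = Complex.I * (lam:ℂ) * P' x - Θ' x := by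
    have hIoo : Set.EqOn f₃' (fun x => Complex.I * (lam:ℂ) * P' x - Θ' x) (Set.Ioo 0 L) := by
      intro x hx
      have hmem : Set.Ioo (0:ℝ) L ∈ nhds x := isOpen_Ioo.mem_nhds hx
      have hev : f₃ =ᶠ[nhds x] fun y => Complex.I * (lam:ℂ) * P y - Θ y :=
        Filter.eventuallyEq_of_mem hmem fun y hy =>
          (eq3 y (Set.Ioo_subset_Icc_self hy)).symm
      rw [hf₃'def]
      rw [hev.deriv_eq]
      exact (((hPd x).const_mul (Complex.I * (lam:ℂ))).sub (hΘd x)).deriv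
    have := hIoo.closure cf₃'
      (((continuous_const.mul cP').sub cΘ'))
    rw [closure_Ioo hL.ne] at this
    exact this
  -- the two complex integrands
  set g₁ : ℝ → ℂ := fun x => 2 * (μ:ℂ) * ((q x : ℝ):ℂ) * (f₄ x * (starRingEnd ℂ) (P' x)
      + (starRingEnd ℂ) (f₃' x) * Θ x) with hg₁def
  set g₂ : ℝ → ℂ := fun x => 2 * (ρ:ℂ) * ((q x : ℝ):ℂ) * (f₂ x * (starRingEnd ℂ) (V' x)
      + Φ x * (starRingEnd ℂ) (f₁' x)) with hg₂def
  have cg₁ : Continuous g₁ := by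
    rw [hg₁def]
    exact (continuous_const.mul (Complex.continuous_ofReal.comp cq)).mul
      ((hf₄c.mul (cconj cP')).add ((cconj cf₃').mul cΘ))
  have cg₂ : Continuous g₂ := by
    rw [hg₂def]
    exact (continuous_const.mul (Complex.continuous_ofReal.comp cq)).mul
      ((hf₂c.mul (cconj cV')).add (cΦ.mul (cconj cf₁')))
  -- pointwise multiplier identity
  have hkey : ∀ x ∈ Set.Icc (0:ℝ) L, q x * E' x = -(g₁ x).re - (g₂ x).re := by
    intro x hx
    have h2x : (ρ:ℂ) * f₂ x = Complex.I * (lam:ℂ) * (ρ:ℂ) * Φ x - (α:ℂ) * V'' x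
        + (γ:ℂ) * (β:ℂ) * P'' x := (eq2 x hx).symm
    have h4x : (μ:ℂ) * f₄ x = Complex.I * (lam:ℂ) * (μ:ℂ) * Θ x - (β:ℂ) * P'' x
        + (γ:ℂ) * (β:ℂ) * V'' x := (eq4 x hx).symm
    have hkc := key_complex ρ μ β γ α₁ α lam (q x) hα (Φ x) (Φ' x) (Θ x) (Θ' x)
      (V' x) (V'' x) (P' x) (P'' x) (f₂ x) (f₄ x) h2x h4x
    rw [hg₁def, hg₂def]
    simp only [hd1 x hx, hd3 x hx]
    rw [Complex.add_re, Complex.add_re] at hkc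
    have hA : (((q x : ℝ):ℂ) * (2*(ρ:ℂ)*(Φ x * (starRingEnd ℂ) (Φ' x))
        + 2*(μ:ℂ)*(Θ x * (starRingEnd ℂ) (Θ' x))
        + 2*(α₁:ℂ)*(V' x * (starRingEnd ℂ) (V'' x))
        + 2*(β:ℂ)*(((γ:ℂ)*V' x - P' x) * (starRingEnd ℂ) ((γ:ℂ)*V'' x - P'' x)))).re
        = q x * E' x := by
      rw [hE'def]
      simp only [Complex.mul_re, Complex.add_re, Complex.add_im, Complex.mul_im,
        Complex.ofReal_re, Complex.ofReal_im, Complex.re_ofNat, Complex.im_ofNat]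
      ring
    linarith [hkc, hA]
  -- FTC
  have hprod : ∀ x, HasDerivAt (fun y => q y * E y) (q' x * E x + q x * E' x) x :=
    fun x => (hqd x).mul (hE x)
  have hFTC : ∫ x in (0:ℝ)..L, (q' x * E x + q x * E' x) = q L * E L - q 0 * E 0 :=
    intervalIntegral.integral_eq_sub_of_hasDerivAt (fun x _ => hprod x)
      (((cq'.mul cE).add (cq.mul cE')).intervalIntegrable 0 L)
  have hsplit : ∫ x in (0:ℝ)..L, (q' x * E x + q x * E' x)
      = (∫ x in (0:ℝ)..L, q' x * E x) + ∫ x in (0:ℝ)..L, q x * E' x :=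
    intervalIntegral.integral_add ((cq'.mul cE).intervalIntegrable 0 L)
      ((cq.mul cE').intervalIntegrable 0 L)
  have hcongr : (∫ x in (0:ℝ)..L, q x * E' x)
      = ∫ x in (0:ℝ)..L, (-(g₁ x).re - (g₂ x).re) := by
    apply intervalIntegral.integral_congr
    intro x hx
    exact hkey x (by rwa [Set.uIcc_of_le hL.le] at hx)
  have hsub : (∫ x in (0:ℝ)..L, (-(g₁ x).re - (g₂ x).re))
      = -(∫ x in (0:ℝ)..L, (g₁ x).re) - ∫ x in (0:ℝ)..L, (g₂ x).re := by
    have hi1 : IntervalIntegrable (fun x => (g₁ x).re) MeasureTheory.volume 0 L :=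
      (Complex.continuous_re.comp cg₁).intervalIntegrable 0 L
    have hi2 : IntervalIntegrable (fun x => (g₂ x).re) MeasureTheory.volume 0 L :=
      (Complex.continuous_re.comp cg₂).intervalIntegrable 0 L
    have hi1n : IntervalIntegrable (fun x => -(g₁ x).re) MeasureTheory.volume 0 L :=
      ((Complex.continuous_re.comp cg₁).neg).intervalIntegrable 0 L
    rw [intervalIntegral.integral_sub hi1n hi2, intervalIntegral.integral_neg]
  have hre₁ : (∫ x in (0:ℝ)..L, (g₁ x).re) = (∫ x in (0:ℝ)..L, g₁ x).re := by
    have hig : IntervalIntegrable g₁ MeasureTheory.volume 0 L := cg₁.intervalIntegrable 0 L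
    have := Complex.reCLM.intervalIntegral_comp_comm hig
    simpa using this
  have hre₂ : (∫ x in (0:ℝ)..L, (g₂ x).re) = (∫ x in (0:ℝ)..L, g₂ x).re := by
    have hig : IntervalIntegrable g₂ MeasureTheory.volume 0 L := cg₂.intervalIntegrable 0 L
    have := Complex.reCLM.intervalIntegral_comp_comm hig
    simpa using this
  -- assemble
  have hEL : q L * (ρ * ‖Φ L‖ ^ 2 + α₁ * ‖V' L‖ ^ 2)
      + q L * (μ * ‖Θ L‖ ^ 2 + β * ‖(γ:ℂ) * V' L - P' L‖ ^ 2)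
      = q L * E L := by rw [hEdef]; ring
  have hint : (∫ x in (0:ℝ)..L, q' x * (ρ * ‖Φ x‖ ^ 2 + μ * ‖Θ x‖ ^ 2
      + α₁ * ‖V' x‖ ^ 2 + β * ‖(γ:ℂ) * V' x - P' x‖ ^ 2))
      = ∫ x in (0:ℝ)..L, q' x * E x := by
    apply intervalIntegral.integral_congr
    intro x _
    rw [hEdef]
  rw [hEL, hint]
  have : q L * E L = (∫ x in (0:ℝ)..L, q' x * E x) + ∫ x in (0:ℝ)..L, q x * E' x := by
    rw [← hsplit, hFTC, hq0]; ring
  rw [this, hcongr, hsub, hre₁, hre₂]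
  ring
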